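/- arXiv:1501.02851 — 2 statements merged into one kernel-verified Lean document; each statement's English description precedes it below -/
import Mathlib

section
/- Let U_j be a degree-p polynomial (in ξ ∈ [-1,1]) valued C¹ function of t satisfying, for every polynomial V of degree ≤ p, the DG weak form (d/dt)∫_{-1}^1 U_j V dξ + (2a/h_j)[U_j(1)V(1) − U_{j-1}(1)V(−1)] − (2a/h_j)∫_{-1}^1 U_j V' dξ = 0. Then U_j satisfies the strong-form PDE ∂_t U_j + (2a/h_j) ∂_ξ U_j = (−1)^{p+1} (a/h_j) [[U_j]] (R⁻_{p+1})'(ξ), where [[U_j]] = U_j(−1) − U_{j-1}(1). -/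
open Polynomial intervalIntegral

/-- The `k`-th Legendre polynomial, defined via the Rodrigues formula. -/
noncomputable def leg (k : ℕ) : Polynomial ℝ :=
  C (1 / (2 ^ k * (k.factorial : ℝ))) * (fun q => derivative q)^[k] ((X ^ 2 - 1) ^ k)

/-- The right Radau polynomial `R⁻_{p+1} = P_{p+1} - P_p`. -/
noncomputable def radau (p : ℕ) : Polynomial ℝ := leg (p + 1) - leg p


lemma poly_ii (Q V : Polynomial ℝ) : IntervalIntegrable (fun x => Q.eval x * V.eval x)
    MeasureTheory.volume (-1) 1 :=
  ((Q.continuous_aeval.mul V.continuous_aeval)).intervalIntegrable _ _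

lemma integral_eval_derivative (Q : Polynomial ℝ) :
    ∫ x in (-1:ℝ)..1, (derivative Q).eval x = Q.eval 1 - Q.eval (-1) :=
  integral_eq_sub_of_hasDerivAt (fun x _ => Q.hasDerivAt x)
    ((derivative Q).continuous_aeval.intervalIntegrable _ _)

lemma parts (P V : Polynomial ℝ) :
    (∫ x in (-1:ℝ)..1, (derivative P).eval x * V.eval x)
      + ∫ x in (-1:ℝ)..1, P.eval x * (derivative V).eval x
      = P.eval 1 * V.eval 1 - P.eval (-1) * V.eval (-1) := by
  have h := integral_eval_derivative (P * V)
  rw [derivative_mul] at h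
  simp only [eval_add, eval_mul] at h
  rw [← h, ← integral_add (poly_ii (derivative P) V) (poly_ii P (derivative V))]

lemma iter_eval (m j : ℕ) (hj : j < m) (c : ℝ) (hc : c = 1 ∨ c = -1) :
    (derivative^[j] ((X^2 - 1 : Polynomial ℝ)^m)).eval c = 0 := by
  obtain ⟨r, hr⟩ := pow_sub_dvd_iterate_derivative_pow (X^2 - 1 : Polynomial ℝ) m j
  rw [hr, eval_mul, eval_pow]
  have : ((X^2 - 1 : Polynomial ℝ)).eval c = 0 := by rcases hc with h | h <;> simp [h]
  rw [this, zero_pow (by omega), zero_mul]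

lemma orth_aux (m : ℕ) (V : Polynomial ℝ) : ∀ j ≤ m,
    (∫ x in (-1:ℝ)..1, (derivative^[m] ((X^2 - 1 : Polynomial ℝ)^m)).eval x * V.eval x)
      = (-1)^j * ∫ x in (-1:ℝ)..1,
          (derivative^[m - j] ((X^2 - 1 : Polynomial ℝ)^m)).eval x * (derivative^[j] V).eval x := by
  intro j hj
  induction j with
  | zero => simp
  | succ j ih =>
    rw [ih (by omega)]
    have hstep : (∫ x in (-1:ℝ)..1,
        (derivative^[m - j] ((X^2 - 1 : Polynomial ℝ)^m)).eval x * (derivative^[j] V).eval x)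
        = - ∫ x in (-1:ℝ)..1,
        (derivative^[m - (j+1)] ((X^2 - 1 : Polynomial ℝ)^m)).eval x * (derivative^[j+1] V).eval x := by
      have hd : derivative (derivative^[m - (j+1)] ((X^2 - 1 : Polynomial ℝ)^m))
          = derivative^[m - j] ((X^2 - 1 : Polynomial ℝ)^m) := by
        rw [← Function.iterate_succ_apply' derivative]
        congr 1
        omega
      have hp := parts (derivative^[m - (j+1)] ((X^2 - 1 : Polynomial ℝ)^m)) (derivative^[j] V)
      rw [hd] at hp
      rw [iter_eval m (m - (j+1)) (by omega) 1 (Or.inl rfl),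
        iter_eval m (m - (j+1)) (by omega) (-1) (Or.inr rfl)] at hp
      simp only [zero_mul, sub_zero] at hp
      rw [Function.iterate_succ_apply' derivative]
      linarith
    rw [hstep]
    ring

lemma leg_orth {m : ℕ} {V : Polynomial ℝ} (hV : V.degree < m) :
    ∫ x in (-1:ℝ)..1, (leg m).eval x * V.eval x = 0 := by
  have hV0 : derivative^[m] V = 0 := by
    rcases eq_or_ne V 0 with rfl | h
    · exact iterate_derivative_zero
    · exact iterate_derivative_eq_zero ((Polynomial.natDegree_lt_iff_degree_lt h).2
        (by simpa using hV))
  have h := orth_aux m V m le_rfl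
  simp only [Nat.sub_self, Function.iterate_zero, id, hV0, eval_zero, mul_zero,
    intervalIntegral.integral_zero, mul_zero] at h
  unfold leg
  simp only [eval_mul, eval_C]
  rw [show (fun q : Polynomial ℝ => derivative q) = (derivative : Polynomial ℝ → Polynomial ℝ)
    from rfl] at *
  calc ∫ x in (-1:ℝ)..1, (1 / (2^m * (m.factorial:ℝ)))
          * (derivative^[m] ((X^2-1:Polynomial ℝ)^m)).eval x * V.eval x
      = (1 / (2^m * (m.factorial:ℝ))) * ∫ x in (-1:ℝ)..1,
          (derivative^[m] ((X^2-1:Polynomial ℝ)^m)).eval x * V.eval x := by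
        rw [← intervalIntegral.integral_const_mul]; simp [mul_assoc]
    _ = 0 := by rw [h, mul_zero]
-- (D^[k] ((X - C c)^k * g)).eval c = k! * g.eval c
lemma iter_eval_root : ∀ (k : ℕ) (c : ℝ) (g : Polynomial ℝ),
    (derivative^[k] ((X - C c)^k * g)).eval c = (k.factorial : ℝ) * g.eval c := by
  intro k
  induction k with
  | zero => intro c g; simp
  | succ k ih =>
    intro c g
    have hd : derivative ((X - C c)^(k+1) * g)
        = (X - C c)^k * (((k:ℝ)+1) • g + (X - C c) * derivative g) := by
      rw [derivative_mul, derivative_pow]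
      simp only [derivative_sub, derivative_X, derivative_C, sub_zero, mul_one]
      push_cast
      ring_nf
      simp [smul_eq_C_mul]
      ring
    rw [Function.iterate_succ_apply, hd, ih]
    simp [Nat.factorial_succ, smul_eq_C_mul]
    push_cast
    ring

lemma leg_eval_one (k : ℕ) : (leg k).eval 1 = 1 := by
  unfold leg
  have hf : ((X:Polynomial ℝ)^2 - 1)^k = (X - C 1)^k * (X + C 1)^k := by
    rw [← mul_pow]; congr 1; simp [sq]; ring
  rw [eval_mul, eval_C, hf, iter_eval_root k 1 ((X + C 1)^k)]
  have : ((X + C 1 : Polynomial ℝ)^k).eval 1 = 2^k := by simp [eval_pow]; norm_num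
  rw [this]
  have h2 : (2:ℝ)^k * (k.factorial:ℝ) ≠ 0 := by positivity
  field_simp

lemma leg_eval_neg_one (k : ℕ) : (leg k).eval (-1) = (-1)^k := by
  unfold leg
  have hf : ((X:Polynomial ℝ)^2 - 1)^k = (X - C (-1))^k * (X - C 1)^k := by
    rw [← mul_pow]; congr 1; simp [sq]; ring
  rw [eval_mul, eval_C, hf, iter_eval_root k (-1) ((X - C 1)^k)]
  have : ((X - C 1 : Polynomial ℝ)^k).eval (-1) = (-2)^k := by simp [eval_pow]; norm_num
  rw [this]
  have h2 : (2:ℝ)^k * (k.factorial:ℝ) ≠ 0 := by positivity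
  field_simp
  rw [neg_pow]
  ring

lemma leg_degree_le (k : ℕ) : (leg k).degree ≤ k := by
  unfold leg
  refine le_trans (degree_mul_le _ _) ?_
  refine le_trans (add_le_add degree_C_le (degree_le_natDegree)) ?_
  rw [zero_add]
  have h := natDegree_iterate_derivative ((X^2 - 1 : Polynomial ℝ)^k) k
  have hnd : ((X^2 - 1 : Polynomial ℝ)^k).natDegree ≤ 2 * k := by
    refine le_trans (natDegree_pow_le) ?_
    have : (X^2 - 1 : Polynomial ℝ).natDegree ≤ 2 :=
      le_trans (natDegree_sub_le _ _) (by simp)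
    nlinarith
  have : (derivative^[k] ((X^2 - 1 : Polynomial ℝ)^k)).natDegree ≤ k := by omega
  exact_mod_cast Nat.cast_le.2 this

lemma radau_degree_le (p : ℕ) : (radau p).degree ≤ p + 1 := by
  unfold radau
  refine le_trans (degree_sub_le _ _) ?_
  rw [max_le_iff]
  exact ⟨by exact_mod_cast leg_degree_le (p+1),
    le_trans (leg_degree_le p) (by exact_mod_cast Nat.cast_le.2 (Nat.le_succ p))⟩
lemma deriv_degree_lt {V : Polynomial ℝ} {p : ℕ} (hV : V.degree ≤ p) :
    (derivative V).degree < p := by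
  rcases eq_or_ne V 0 with rfl | h
  · simp only [derivative_zero, degree_zero]; exact WithBot.bot_lt_coe p
  rcases eq_or_ne V.degree 0 with h0 | h0
  · rw [Polynomial.eq_C_of_degree_le_zero h0.le]
    simp only [derivative_C, degree_zero]; exact WithBot.bot_lt_coe p
  · exact lt_of_lt_of_le (Polynomial.degree_derivative_lt h) hV

lemma radau_key (p : ℕ) (V : Polynomial ℝ) (hV : V.degree ≤ p) :
    ∫ x in (-1:ℝ)..1, (derivative (radau p)).eval x * V.eval x
      = 2 * (-1:ℝ)^p * V.eval (-1) := by
  have hp := parts (radau p) V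
  have h1 : (radau p).eval 1 = 0 := by
    simp [radau, leg_eval_one]
  have h2 : (radau p).eval (-1) = -2 * (-1:ℝ)^p := by
    simp only [radau, eval_sub, leg_eval_neg_one, pow_succ]
    ring
  have horth : (∫ x in (-1:ℝ)..1, (radau p).eval x * (derivative V).eval x) = 0 := by
    have hd := deriv_degree_lt hV
    have e1 : (derivative V).degree < ((p:ℕ):WithBot ℕ) + 1 :=
      lt_of_lt_of_le hd (by exact_mod_cast le_of_lt (by exact_mod_cast Nat.lt_succ_self p))
    have o1 := leg_orth (m := p + 1) (V := derivative V) (by exact_mod_cast e1)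
    have o2 := leg_orth (m := p) (V := derivative V) hd
    simp only [radau, eval_sub, sub_mul]
    rw [intervalIntegral.integral_sub (poly_ii _ _) (poly_ii _ _), o1, o2, sub_zero]
  rw [horth, h1, h2] at hp
  linarith [hp]

lemma vanish {G : Polynomial ℝ} (h : ∫ x in (-1:ℝ)..1, G.eval x * G.eval x = 0) : G = 0 := by
  by_contra hG
  have hroots : {x : ℝ | G.IsRoot x}.Finite := Polynomial.finite_setOf_isRoot hG
  have hinf : (Set.Icc (-1:ℝ) 1).Infinite := Set.Icc_infinite (by norm_num)
  obtain ⟨c, hc, hcr⟩ := (hinf.diff hroots).nonempty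
  have hpos : 0 < ∫ x in (-1:ℝ)..1, G.eval x * G.eval x := by
    apply intervalIntegral.integral_pos (by norm_num)
    · exact ((G.continuous_aeval.mul G.continuous_aeval)).continuousOn
    · intro x _; exact mul_self_nonneg _
    · have hne : G.eval c ≠ 0 := hcr
      exact ⟨c, hc, mul_self_pos.2 hne⟩
  linarith
lemma hvs (p : ℕ) : Set.InjOn (fun n : ℕ => (n : ℝ)) (Finset.range (p+1)) :=
  fun _ _ _ _ h => Nat.cast_injective h

lemma interp {p : ℕ} {Q : Polynomial ℝ} (hQ : Q.degree ≤ p) :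
    Q = ∑ i ∈ Finset.range (p+1),
      C (Q.eval (i:ℝ)) * Lagrange.basis (Finset.range (p+1)) (fun n : ℕ => (n:ℝ)) i := by
  have h := Lagrange.eq_interpolate (v := fun n : ℕ => (n:ℝ)) (hvs p)
    (f := Q) (by rw [Finset.card_range]; exact lt_of_le_of_lt hQ (by exact_mod_cast Nat.lt_succ_self p))
  rw [Lagrange.interpolate_apply] at h
  exact h

lemma int_expand {p : ℕ} {Q : Polynomial ℝ} (hQ : Q.degree ≤ p) (V : Polynomial ℝ) :
    (∫ x in (-1:ℝ)..1, Q.eval x * V.eval x)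
      = ∑ i ∈ Finset.range (p+1), Q.eval (i:ℝ) *
          ∫ x in (-1:ℝ)..1,
            (Lagrange.basis (Finset.range (p+1)) (fun n : ℕ => (n:ℝ)) i).eval x * V.eval x := by
  conv_lhs => rw [interp hQ]
  have : ∀ x : ℝ, (∑ i ∈ Finset.range (p+1),
      C (Q.eval (i:ℝ)) * Lagrange.basis (Finset.range (p+1)) (fun n : ℕ => (n:ℝ)) i).eval x * V.eval x
      = ∑ i ∈ Finset.range (p+1), Q.eval (i:ℝ) *
          ((Lagrange.basis (Finset.range (p+1)) (fun n : ℕ => (n:ℝ)) i).eval x * V.eval x) := by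
    intro x
    rw [eval_finset_sum, Finset.sum_mul]
    exact Finset.sum_congr rfl (fun i _ => by rw [eval_mul, eval_C, mul_assoc])
  simp_rw [this]
  rw [intervalIntegral.integral_finset_sum]
  · exact Finset.sum_congr rfl (fun i _ => by rw [intervalIntegral.integral_const_mul])
  · intro i _
    exact (continuous_const.mul ((Polynomial.continuous_aeval _).mul
      (Polynomial.continuous_aeval _))).intervalIntegrable _ _

lemma degree_W_le (p : ℕ) (r : ℕ → ℝ) :
    (∑ i ∈ Finset.range (p+1),
      C (r i) * Lagrange.basis (Finset.range (p+1)) (fun n : ℕ => (n:ℝ)) i).degree ≤ p := by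
  refine le_trans (degree_sum_le _ _) ?_
  rw [Finset.sup_le_iff]
  intro i hi
  refine le_trans (degree_mul_le _ _) ?_
  refine le_trans (add_le_add degree_C_le le_rfl) ?_
  rw [zero_add, Lagrange.degree_basis (hvs p) hi, Finset.card_range]
  simp

/-- If the degree-`p` polynomial `U t` (with time derivative `U' t`) satisfies the DG weak
form with upwind boundary datum `uL t = U_{j-1}(1)`, then it satisfies the strong-form PDE
`∂ₜ U + (2a/h) ∂_ξ U = (-1)^{p+1} (a/h) [[U]] (R⁻_{p+1})'`. -/
theorem DG_weak_implies_strong (p : ℕ) (a hj : ℝ) (ha : 0 < a) (hhj : 0 < hj)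
    (U U' : ℝ → Polynomial ℝ) (uL : ℝ → ℝ)
    (hdeg : ∀ t, (U t).degree ≤ p)
    (hderiv : ∀ t ξ, HasDerivAt (fun τ => (U τ).eval ξ) ((U' t).eval ξ) t)
    (hweak : ∀ t, ∀ V : Polynomial ℝ, V.degree ≤ p →
      HasDerivAt (fun τ => ∫ ξ in (-1 : ℝ)..1, (U τ).eval ξ * V.eval ξ)
        (-((2 * a / hj) * ((U t).eval 1 * V.eval 1 - uL t * V.eval (-1)) -
            (2 * a / hj) * ∫ ξ in (-1 : ℝ)..1, (U t).eval ξ * (derivative V).eval ξ)) t) :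
    ∀ t, ∀ ξ : ℝ,
      (U' t).eval ξ + (2 * a / hj) * (derivative (U t)).eval ξ =
        (-1 : ℝ) ^ (p + 1) * (a / hj) * ((U t).eval (-1) - uL t) *
          (derivative (radau p)).eval ξ := by
  intro t
  set B : ℕ → Polynomial ℝ := Lagrange.basis (Finset.range (p+1)) (fun n : ℕ => (n:ℝ)) with hB
  set W : Polynomial ℝ := ∑ i ∈ Finset.range (p+1), C ((U' t).eval (i:ℝ)) * B i with hWdef
  have hW : U' t = W := by
    apply Polynomial.funext
    intro ξ
    have h1 : HasDerivAt (fun τ => (U τ).eval ξ)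
        (∑ i ∈ Finset.range (p+1), (U' t).eval (i:ℝ) * (B i).eval ξ) t := by
      have h2 : (fun τ => (U τ).eval ξ)
          = fun τ => ∑ i ∈ Finset.range (p+1), (U τ).eval (i:ℝ) * (B i).eval ξ := by
        funext τ
        conv_lhs => rw [interp (hdeg τ)]
        rw [eval_finset_sum]
        exact Finset.sum_congr rfl (fun i _ => by rw [eval_mul, eval_C])
      rw [h2]
      exact HasDerivAt.fun_sum (fun i _ => (hderiv t (i:ℝ)).mul_const _)
    have := (hderiv t ξ).unique h1
    rw [this, hWdef, eval_finset_sum]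
    exact Finset.sum_congr rfl (fun i _ => by rw [eval_mul, eval_C])
  have hU'deg : (U' t).degree ≤ p := by rw [hW]; exact degree_W_le p _
  have hint : ∀ V : Polynomial ℝ, V.degree ≤ p →
      (∫ x in (-1:ℝ)..1, (U' t).eval x * V.eval x)
        = -((2 * a / hj) * ((U t).eval 1 * V.eval 1 - uL t * V.eval (-1)) -
            (2 * a / hj) * ∫ x in (-1:ℝ)..1, (U t).eval x * (derivative V).eval x) := by
    intro V hV
    have hD : HasDerivAt (fun τ => ∫ x in (-1:ℝ)..1, (U τ).eval x * V.eval x)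
        (∫ x in (-1:ℝ)..1, (U' t).eval x * V.eval x) t := by
      have h2 : (fun τ => ∫ x in (-1:ℝ)..1, (U τ).eval x * V.eval x)
          = fun τ => ∑ i ∈ Finset.range (p+1), (U τ).eval (i:ℝ) *
              ∫ x in (-1:ℝ)..1, (B i).eval x * V.eval x := by
        funext τ; exact int_expand (hdeg τ) V
      rw [h2, int_expand hU'deg V]
      exact HasDerivAt.fun_sum (fun i _ => (hderiv t (i:ℝ)).mul_const _)
    exact hD.unique (hweak t V hV)
  set K : ℝ := (-1 : ℝ) ^ (p + 1) * (a / hj) * ((U t).eval (-1) - uL t) with hK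
  set G : Polynomial ℝ := U' t + C (2 * a / hj) * derivative (U t) - C K * derivative (radau p)
    with hG
  have hGdeg : G.degree ≤ p := by
    rw [hG]
    refine le_trans (degree_sub_le _ _) (max_le (le_trans (degree_add_le _ _) (max_le hU'deg ?_)) ?_)
    · exact le_trans (degree_mul_le _ _) (le_trans (add_le_add degree_C_le le_rfl)
        (by rw [zero_add]; exact le_of_lt (deriv_degree_lt (hdeg t))))
    · refine le_trans (degree_mul_le _ _) (le_trans (add_le_add degree_C_le le_rfl) ?_)
      rw [zero_add]
      have h1 : (radau p).natDegree ≤ p + 1 := natDegree_le_iff_degree_le.2 (radau_degree_le p)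
      have h2 : (derivative (radau p)).natDegree ≤ p := by
        have := natDegree_iterate_derivative (radau p) 1
        simp only [Function.iterate_one] at this
        omega
      exact le_trans degree_le_natDegree (by exact_mod_cast Nat.cast_le.2 h2)
  have hkey : ∀ V : Polynomial ℝ, V.degree ≤ p →
      (∫ x in (-1:ℝ)..1, G.eval x * V.eval x) = 0 := by
    intro V hV
    have hsplit : (∫ x in (-1:ℝ)..1, G.eval x * V.eval x)
        = (∫ x in (-1:ℝ)..1, (U' t).eval x * V.eval x)
          + (2 * a / hj) * (∫ x in (-1:ℝ)..1, (derivative (U t)).eval x * V.eval x)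
          - K * ∫ x in (-1:ℝ)..1, (derivative (radau p)).eval x * V.eval x := by
      rw [← intervalIntegral.integral_const_mul, ← intervalIntegral.integral_const_mul,
        ← intervalIntegral.integral_add (f := fun x => (U' t).eval x * V.eval x)
          (g := fun x => 2 * a / hj * ((derivative (U t)).eval x * V.eval x)) (poly_ii _ _)
          ((continuous_const.mul ((derivative (U t)).continuous.mul
            V.continuous)).intervalIntegrable _ _),
        ← intervalIntegral.integral_sub
          (f := fun x => (U' t).eval x * V.eval x + 2 * a / hj * ((derivative (U t)).eval x * V.eval x))
          (g := fun x => K * ((derivative (radau p)).eval x * V.eval x))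
          ((((U' t).continuous.mul V.continuous).add
            (continuous_const.mul ((derivative (U t)).continuous.mul
              V.continuous))).intervalIntegrable _ _)
          ((continuous_const.mul ((derivative (radau p)).continuous.mul
            V.continuous)).intervalIntegrable _ _)]
      apply intervalIntegral.integral_congr
      intro x _
      simp only [hG, eval_add, eval_sub, eval_mul, eval_C]
      ring
    have hparts := parts (U t) V
    have hradau := radau_key p V hV
    have hK2 : K * (2 * (-1:ℝ)^p) = -((2 * a / hj) * ((U t).eval (-1) - uL t)) := by
      have h1 : ((-1:ℝ))^(p+1) * (-1:ℝ)^p = -1 := by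
        rw [← pow_add, show p+1+p = 2*p+1 from by ring, pow_succ, pow_mul]
        norm_num
      rw [hK]
      linear_combination (2 * (a/hj) * ((U t).eval (-1) - uL t)) * h1
    rw [hsplit, hint V hV, hradau]
    linear_combination (2*a/hj) * hparts - (V.eval (-1)) * hK2
  have hG0 : G = 0 := vanish (hkey G hGdeg)
  intro ξ
  have := congrArg (eval ξ) hG0
  simp only [hG, eval_add, eval_sub, eval_mul, eval_C, eval_zero] at this
  linarith
end

section
/- Let P(z)/Q(z) be the p/(p+1) Padé approximant of e^z. If error terms of the form ε(ξ,t) = c·R⁻_{p+1}(ξ) + ∑_{k=1}^{p} α_k R⁻⁽⁻ᵏ⁾_{p+1}(ξ) + ρ(ξ) are given with c = O(h^{p+1}), α_k = O(h^{p+1+k}), and ‖ρ‖ = O(h^{2p+2}), then for each m with 0 ≤ m ≤ p, the m-th moment satisfies ∫_{-1}^1 ε(ξ,t) P_m(ξ) dξ = O(h^{2p+1−m}). -/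
open Polynomial intervalIntegral

/-- Iterated antiderivatives of the right Radau polynomial, with base point `-1`. -/
noncomputable def radauIter (p : ℕ) : ℕ → ℝ → ℝ
  | 0 => fun ξ => (radau p).eval ξ
  | (k + 1) => fun ξ => ∫ s in (-1 : ℝ)..ξ, radauIter p k s

noncomputable def pint (q : ℝ[X]) : ℝ[X] := q.sum fun n a => C (a / (n+1)) * X^(n+1)

lemma derivative_pint (q : ℝ[X]) : derivative (pint q) = q := by
  unfold pint
  rw [Polynomial.sum, Polynomial.derivative_sum]
  conv_rhs => rw [← q.sum_C_mul_X_pow_eq]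
  rw [Polynomial.sum]
  refine Finset.sum_congr rfl fun n _ => ?_
  rw [derivative_C_mul, derivative_X_pow]
  rw [← mul_assoc, ← C_mul]
  congr 1
  push_cast
  field_simp

lemma natDegree_pint_le (q : ℝ[X]) : (pint q).natDegree ≤ q.natDegree + 1 := by
  unfold pint
  rw [Polynomial.sum]
  refine Polynomial.natDegree_sum_le_of_forall_le _ _ fun n hn => ?_
  calc (C (q.coeff n / (n+1)) * X^(n+1)).natDegree ≤ n + 1 := by
        apply (natDegree_C_mul_le _ _).trans; simp
    _ ≤ q.natDegree + 1 := by
        exact Nat.add_le_add_right (Polynomial.le_natDegree_of_mem_supp n hn) 1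

lemma integral_eval_derivative_s18 (f : ℝ[X]) (a b : ℝ) :
    ∫ x in a..b, (derivative f).eval x = f.eval b - f.eval a := by
  refine intervalIntegral.integral_eq_sub_of_hasDerivAt (fun x _ => f.hasDerivAt x) ?_
  exact ((derivative f).continuous).intervalIntegrable a b

lemma poly_ibp (f g : ℝ[X]) :
    ∫ x in (-1:ℝ)..1, (derivative f).eval x * g.eval x
      = f.eval 1 * g.eval 1 - f.eval (-1) * g.eval (-1)
        - ∫ x in (-1:ℝ)..1, f.eval x * (derivative g).eval x := by
  have h := integral_eval_derivative_s18 (f * g) (-1) 1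
  rw [derivative_mul] at h
  have hsplit : ∫ x in (-1:ℝ)..1, (derivative f * g + f * derivative g).eval x
      = (∫ x in (-1:ℝ)..1, (derivative f).eval x * g.eval x)
        + ∫ x in (-1:ℝ)..1, f.eval x * (derivative g).eval x := by
    rw [← intervalIntegral.integral_add (f := fun x => (derivative f).eval x * g.eval x)
      (g := fun x => f.eval x * (derivative g).eval x)
      (((derivative f).continuous.mul g.continuous).intervalIntegrable _ _)
      ((f.continuous.mul (derivative g).continuous).intervalIntegrable _ _)]
    simp [eval_add, eval_mul]
  rw [hsplit] at h
  simp only [eval_mul] at h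
  linarith

lemma eval_iter_deriv_zero {n j : ℕ} (hj : j < n) {t : ℝ} (ht : t ^ 2 = 1) :
    (derivative^[j] (((X:ℝ[X]) ^ 2 - 1) ^ n)).eval t = 0 := by
  obtain ⟨g, hg⟩ := pow_sub_dvd_iterate_derivative_pow ((X:ℝ[X])^2 - 1) n j
  rw [hg, eval_mul, eval_pow]
  have : ((X:ℝ[X]) ^ 2 - 1).eval t = 0 := by simp [ht]
  rw [this, zero_pow (by omega), zero_mul]

lemma key_flip (n : ℕ) : ∀ j ≤ n, ∀ q : ℝ[X],
    ∫ x in (-1:ℝ)..1, (derivative^[n] (((X:ℝ[X])^2-1)^n)).eval x * q.eval x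
      = (-1:ℝ)^j * ∫ x in (-1:ℝ)..1,
          (derivative^[n-j] (((X:ℝ[X])^2-1)^n)).eval x * (derivative^[j] q).eval x := by
  intro j
  induction j with
  | zero => intro _ q; simp
  | succ j ih =>
    intro hj q
    rw [ih (by omega) q]
    have hiter : derivative^[n - j] (((X:ℝ[X])^2-1)^n)
        = derivative (derivative^[n - (j+1)] (((X:ℝ[X])^2-1)^n)) := by
      rw [← Function.iterate_succ_apply' derivative]
      congr 1
      omega
    rw [hiter, poly_ibp]
    rw [eval_iter_deriv_zero (by omega) (by norm_num), eval_iter_deriv_zero (by omega) (by norm_num)]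
    rw [← Function.iterate_succ_apply' derivative]
    ring

lemma leg_orth_s18 {n : ℕ} {q : ℝ[X]} (h : q.natDegree < n) :
    ∫ x in (-1:ℝ)..1, (leg n).eval x * q.eval x = 0 := by
  unfold leg
  simp only [eval_mul, eval_C, mul_assoc]
  rw [intervalIntegral.integral_const_mul]
  rw [show ((fun q : ℝ[X] => derivative q)^[n] ((X ^ 2 - 1) ^ n)) = derivative^[n] (((X:ℝ[X])^2-1)^n) from rfl]
  rw [key_flip n n le_rfl q]
  rw [Polynomial.iterate_derivative_eq_zero (by omega : q.natDegree < n)]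
  simp

lemma natDegree_leg_le (m : ℕ) : (leg m).natDegree ≤ m := by
  unfold leg
  refine (natDegree_C_mul_le _ _).trans ?_
  refine (Polynomial.natDegree_iterate_derivative _ _).trans ?_
  have : (((X:ℝ[X]) ^ 2 - 1) ^ m).natDegree ≤ 2 * m := by
    refine (natDegree_pow_le).trans ?_
    have : ((X:ℝ[X]) ^ 2 - 1).natDegree ≤ 2 := by
      refine (natDegree_sub_le _ _).trans ?_
      simp
    nlinarith [this]
  omega

noncomputable def rp (p : ℕ) : ℕ → ℝ[X]
  | 0 => radau p
  | (k+1) => pint (rp p k) - C ((pint (rp p k)).eval (-1))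

lemma derivative_rp (p k : ℕ) : derivative (rp p (k+1)) = rp p k := by
  show derivative (pint (rp p k) - C _) = _
  rw [derivative_sub, derivative_C, sub_zero, derivative_pint]

lemma rp_eval_neg_one (p k : ℕ) : (rp p (k+1)).eval (-1) = 0 := by
  show (pint (rp p k) - C ((pint (rp p k)).eval (-1))).eval (-1) = 0
  simp

lemma radauIter_eq (p : ℕ) : ∀ k, radauIter p k = fun ξ => (rp p k).eval ξ := by
  intro k
  induction k with
  | zero => rfl
  | succ k ih =>
    funext ξ
    show (∫ s in (-1:ℝ)..ξ, radauIter p k s) = _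
    rw [ih]
    have : (∫ s in (-1:ℝ)..ξ, (rp p k).eval s)
        = (pint (rp p k)).eval ξ - (pint (rp p k)).eval (-1) := by
      rw [← integral_eval_derivative_s18 (pint (rp p k)) (-1) ξ, derivative_pint]
    rw [this]
    show _ = (pint (rp p k) - C _).eval ξ
    simp

lemma radau_orth {p : ℕ} {q : ℝ[X]} (h : q.natDegree < p) :
    ∫ x in (-1:ℝ)..1, (radau p).eval x * q.eval x = 0 := by
  unfold radau
  simp only [eval_sub, sub_mul]
  rw [intervalIntegral.integral_sub (f := fun x => (leg (p+1)).eval x * q.eval x)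
    (g := fun x => (leg p).eval x * q.eval x)
    (((leg (p+1)).continuous.mul q.continuous).intervalIntegrable _ _)
    (((leg p).continuous.mul q.continuous).intervalIntegrable _ _)]
  rw [leg_orth_s18 (by omega), leg_orth_s18 h, sub_zero]

lemma rp_orth (p : ℕ) : ∀ k, ∀ q : ℝ[X], k + q.natDegree < p →
    ∫ x in (-1:ℝ)..1, (rp p k).eval x * q.eval x = 0 := by
  intro k
  induction k with
  | zero => intro q h; exact radau_orth (by omega)
  | succ k ih =>
    intro q h
    have h1 : (rp p (k+1)).eval 1 = 0 := by
      have := integral_eval_derivative_s18 (rp p (k+1)) (-1) 1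
      rw [derivative_rp, rp_eval_neg_one, sub_zero] at this
      rw [← this]
      have hd : k + (1:ℝ[X]).natDegree < p := by
        rw [Polynomial.natDegree_one]; omega
      have := ih 1 hd
      simpa using this
    have hq : q = derivative (pint q) := (derivative_pint q).symm
    rw [show ∫ x in (-1:ℝ)..1, (rp p (k+1)).eval x * q.eval x
        = ∫ x in (-1:ℝ)..1, (derivative (pint q)).eval x * (rp p (k+1)).eval x from by
      rw [← hq]; congr 1; funext x; ring]
    rw [poly_ibp, h1, rp_eval_neg_one]
    have h2 : ∫ x in (-1:ℝ)..1, (pint q).eval x * (derivative (rp p (k+1))).eval x = 0 := by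
      rw [derivative_rp]
      rw [show ∫ x in (-1:ℝ)..1, (pint q).eval x * (rp p k).eval x
          = ∫ x in (-1:ℝ)..1, (rp p k).eval x * (pint q).eval x from by
        congr 1; funext x; ring]
      exact ih (pint q) (by have := natDegree_pint_le q; omega)
    rw [h2]
    ring

lemma eval_abs_le (q : ℝ[X]) {x : ℝ} (hx : |x| ≤ 1) :
    |q.eval x| ≤ ∑ i ∈ Finset.range (q.natDegree + 1), |q.coeff i| := by
  rw [Polynomial.eval_eq_sum_range]
  refine (Finset.abs_sum_le_sum_abs _ _).trans ?_
  refine Finset.sum_le_sum fun i _ => ?_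
  rw [abs_mul]
  calc |q.coeff i| * |x ^ i| ≤ |q.coeff i| * 1 := by
        refine mul_le_mul_of_nonneg_left ?_ (abs_nonneg _)
        rw [abs_pow]
        exact pow_le_one₀ (abs_nonneg _) hx
    _ = |q.coeff i| := mul_one _

theorem moments_of_superconvergent_error (p : ℕ) (A : ℝ) :
    ∃ C : ℝ, ∀ h : ℝ, 0 < h → h ≤ 1 → ∀ (c : ℝ) (α : ℕ → ℝ) (ρ : ℝ → ℝ),
      Continuous ρ →
      |c| ≤ A * h ^ (p + 1) →
      (∀ k ∈ Finset.Icc 1 p, |α k| ≤ A * h ^ (p + 1 + k)) →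
      (∀ ξ ∈ Set.Icc (-1 : ℝ) 1, |ρ ξ| ≤ A * h ^ (2 * p + 2)) →
      ∀ m ≤ p,
        |∫ ξ in (-1 : ℝ)..1,
            (c * (radau p).eval ξ + (∑ k ∈ Finset.Icc 1 p, α k * radauIter p k ξ) + ρ ξ) *
              (leg m).eval ξ| ≤ C * h ^ (2 * p + 1 - m) := by
  classical
  set Mleg : ℕ → ℝ := fun m => ∑ i ∈ Finset.range ((leg m).natDegree + 1), |(leg m).coeff i|
    with hMleg
  set B : ℕ → ℕ → ℝ := fun k m => |∫ x in (-1:ℝ)..1, (rp p k).eval x * (leg m).eval x| with hB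
  have hMleg_nonneg : ∀ m, 0 ≤ Mleg m := fun m =>
    Finset.sum_nonneg fun i _ => abs_nonneg _
  have hB_nonneg : ∀ k m, 0 ≤ B k m := fun k m => abs_nonneg _
  refine ⟨|A| * ((∑ m ∈ Finset.range (p+1), B 0 m)
      + (∑ k ∈ Finset.Icc 1 p, ∑ m ∈ Finset.range (p+1), B k m)
      + (∑ m ∈ Finset.range (p+1), 2 * Mleg m)), ?_⟩
  intro h hh0 hh1 c α ρ hρc hc hα hρ m hm
  have hA : (0:ℝ) ≤ A := by
    have h1 : (0:ℝ) ≤ A * h ^ (p+1) := le_trans (abs_nonneg c) hc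
    nlinarith [pow_pos hh0 (p+1)]
  have hpow_pos : (0:ℝ) < h ^ (2*p+1-m) := pow_pos hh0 _
  -- rewrite radauIter as polynomial evaluation
  simp only [radauIter_eq]
  -- name the three pieces
  set I0 : ℝ := ∫ x in (-1:ℝ)..1, (rp p 0).eval x * (leg m).eval x with hI0
  have hsplit : (∫ ξ in (-1 : ℝ)..1,
      (c * (radau p).eval ξ + (∑ k ∈ Finset.Icc 1 p, α k * (rp p k).eval ξ) + ρ ξ) *
        (leg m).eval ξ)
      = c * I0
        + (∑ k ∈ Finset.Icc 1 p, α k * ∫ x in (-1:ℝ)..1, (rp p k).eval x * (leg m).eval x)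
        + ∫ x in (-1:ℝ)..1, ρ x * (leg m).eval x := by
    have c1 : Continuous fun ξ : ℝ => c * (radau p).eval ξ * (leg m).eval ξ :=
      (continuous_const.mul (radau p).continuous).mul (leg m).continuous
    have c2 : Continuous fun ξ : ℝ =>
        (∑ k ∈ Finset.Icc 1 p, α k * (rp p k).eval ξ) * (leg m).eval ξ := by
      refine Continuous.mul ?_ (leg m).continuous
      exact continuous_finset_sum _ fun k _ => (continuous_const.mul (rp p k).continuous)
    have c3 : Continuous fun ξ : ℝ => ρ ξ * (leg m).eval ξ := hρc.mul (leg m).continuous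
    rw [show (fun ξ : ℝ =>
        (c * (radau p).eval ξ + (∑ k ∈ Finset.Icc 1 p, α k * (rp p k).eval ξ) + ρ ξ) *
          (leg m).eval ξ)
        = fun ξ : ℝ => (c * (radau p).eval ξ * (leg m).eval ξ
            + (∑ k ∈ Finset.Icc 1 p, α k * (rp p k).eval ξ) * (leg m).eval ξ)
            + ρ ξ * (leg m).eval ξ from by funext ξ; ring]
    rw [intervalIntegral.integral_add (f := fun ξ : ℝ => c * (radau p).eval ξ * (leg m).eval ξ
        + (∑ k ∈ Finset.Icc 1 p, α k * (rp p k).eval ξ) * (leg m).eval ξ)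
      (g := fun ξ : ℝ => ρ ξ * (leg m).eval ξ) ((c1.add c2).intervalIntegrable _ _)
      (c3.intervalIntegrable _ _),
      intervalIntegral.integral_add (c1.intervalIntegrable _ _) (c2.intervalIntegrable _ _)]
    congr 1
    congr 1
    · rw [show (fun ξ : ℝ => c * (radau p).eval ξ * (leg m).eval ξ)
          = fun ξ : ℝ => c * ((rp p 0).eval ξ * (leg m).eval ξ) from by
        funext ξ; show _ = c * ((radau p).eval ξ * _); ring]
      rw [intervalIntegral.integral_const_mul]
    · rw [show (fun ξ : ℝ =>
          (∑ k ∈ Finset.Icc 1 p, α k * (rp p k).eval ξ) * (leg m).eval ξ)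
          = fun ξ : ℝ => ∑ k ∈ Finset.Icc 1 p, α k * ((rp p k).eval ξ * (leg m).eval ξ) from by
        funext ξ; rw [Finset.sum_mul]; exact Finset.sum_congr rfl fun k _ => by ring]
      rw [intervalIntegral.integral_finset_sum
        (f := fun k (ξ : ℝ) => α k * ((rp p k).eval ξ * (leg m).eval ξ)) fun k _ =>
        ((continuous_const.mul ((rp p k).continuous.mul (leg m).continuous)).intervalIntegrable _ _)]
      exact Finset.sum_congr rfl fun k _ => intervalIntegral.integral_const_mul _ _
  rw [hsplit]
  have hdegleg : (leg m).natDegree ≤ m := natDegree_leg_le m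
  -- Term 1 bound
  have hT1 : |c * I0| ≤ |A| * h ^ (2*p+1-m) * B 0 m := by
    rcases lt_or_eq_of_le hm with hlt | heq
    · have : I0 = 0 := rp_orth p 0 (leg m) (by omega)
      simp [this]
      positivity
    · rw [abs_mul]
      have hexp2 : (2*p+1-m : ℕ) = p + 1 := by omega
      rw [hexp2]
      calc |c| * |I0| ≤ (A * h ^ (p+1)) * |I0| :=
            mul_le_mul_of_nonneg_right hc (abs_nonneg _)
        _ ≤ (|A| * h ^ (p+1)) * B 0 m := by
            refine mul_le_mul_of_nonneg_right ?_ (abs_nonneg _)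
            exact mul_le_mul_of_nonneg_right (le_abs_self A) (le_of_lt (pow_pos hh0 _))
        _ = |A| * h ^ (p+1) * B 0 m := rfl
  -- Term 2 bound
  have hT2 : |∑ k ∈ Finset.Icc 1 p, α k * ∫ x in (-1:ℝ)..1, (rp p k).eval x * (leg m).eval x|
      ≤ |A| * h ^ (2*p+1-m) * ∑ k ∈ Finset.Icc 1 p, B k m := by
    refine (Finset.abs_sum_le_sum_abs _ _).trans ?_
    rw [Finset.mul_sum]
    refine Finset.sum_le_sum fun k hk => ?_
    rw [Finset.mem_Icc] at hk
    rw [abs_mul]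
    by_cases hkm : k + m < p
    · have : (∫ x in (-1:ℝ)..1, (rp p k).eval x * (leg m).eval x) = 0 :=
        rp_orth p k (leg m) (by omega)
      rw [this, abs_zero, mul_zero]
      positivity
    · push_neg at hkm
      have hα' := hα k (Finset.mem_Icc.mpr hk)
      have hexp : h ^ (p + 1 + k) ≤ h ^ (2*p+1-m) :=
        pow_le_pow_of_le_one (le_of_lt hh0) hh1 (by omega)
      calc |α k| * |∫ x in (-1:ℝ)..1, (rp p k).eval x * (leg m).eval x|
          ≤ (A * h ^ (p+1+k)) * B k m := mul_le_mul_of_nonneg_right hα' (abs_nonneg _)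
        _ ≤ (|A| * h ^ (2*p+1-m)) * B k m := by
            refine mul_le_mul_of_nonneg_right ?_ (hB_nonneg k m)
            calc A * h ^ (p+1+k) ≤ |A| * h ^ (p+1+k) :=
                  mul_le_mul_of_nonneg_right (le_abs_self A) (le_of_lt (pow_pos hh0 _))
              _ ≤ |A| * h ^ (2*p+1-m) :=
                  mul_le_mul_of_nonneg_left hexp (abs_nonneg A)
        _ = |A| * h ^ (2*p+1-m) * B k m := rfl
  -- Term 3 bound
  have hT3 : |∫ x in (-1:ℝ)..1, ρ x * (leg m).eval x|
      ≤ |A| * h ^ (2*p+1-m) * (2 * Mleg m) := by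
    have hbound : ∀ x ∈ Set.uIoc (-1:ℝ) 1, ‖ρ x * (leg m).eval x‖ ≤ A * h ^ (2*p+2) * Mleg m := by
      intro x hx
      rw [Set.uIoc_of_le (by norm_num : (-1:ℝ) ≤ 1)] at hx
      have hx' : x ∈ Set.Icc (-1:ℝ) 1 := ⟨le_of_lt hx.1, hx.2⟩
      rw [Real.norm_eq_abs, abs_mul]
      have h1 := hρ x hx'
      have h2 : |(leg m).eval x| ≤ Mleg m := eval_abs_le (leg m) (abs_le.mpr ⟨hx'.1, hx'.2⟩)
      exact mul_le_mul h1 h2 (abs_nonneg _) (le_trans (abs_nonneg _) h1)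
    have := intervalIntegral.norm_integral_le_of_norm_le_const hbound
    rw [Real.norm_eq_abs] at this
    have h2 : |(1:ℝ) - (-1)| = 2 := by norm_num
    rw [h2] at this
    refine this.trans ?_
    have hexp : h ^ (2*p+2) ≤ h ^ (2*p+1-m) :=
      pow_le_pow_of_le_one (le_of_lt hh0) hh1 (by omega)
    calc A * h ^ (2*p+2) * Mleg m * 2 = (A * h ^ (2*p+2)) * (2 * Mleg m) := by ring
      _ ≤ (|A| * h ^ (2*p+1-m)) * (2 * Mleg m) := by
          refine mul_le_mul_of_nonneg_right ?_ (by positivity)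
          calc A * h ^ (2*p+2) ≤ |A| * h ^ (2*p+2) :=
              mul_le_mul_of_nonneg_right (le_abs_self A) (le_of_lt (pow_pos hh0 _))
            _ ≤ |A| * h ^ (2*p+1-m) := mul_le_mul_of_nonneg_left hexp (abs_nonneg A)
      _ = |A| * h ^ (2*p+1-m) * (2 * Mleg m) := rfl
  -- Combine
  have hmem : m ∈ Finset.range (p+1) := Finset.mem_range.mpr (by omega)
  have hS0 : B 0 m ≤ ∑ m' ∈ Finset.range (p+1), B 0 m' :=
    Finset.single_le_sum (fun i _ => hB_nonneg 0 i) hmem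
  have hS1 : (∑ k ∈ Finset.Icc 1 p, B k m)
      ≤ ∑ k ∈ Finset.Icc 1 p, ∑ m' ∈ Finset.range (p+1), B k m' :=
    Finset.sum_le_sum fun k _ => Finset.single_le_sum (fun i _ => hB_nonneg k i) hmem
  have hS2 : 2 * Mleg m ≤ ∑ m' ∈ Finset.range (p+1), 2 * Mleg m' :=
    Finset.single_le_sum (f := fun m' => 2 * Mleg m')
      (fun i _ => mul_nonneg (by norm_num) (hMleg_nonneg i)) hmem
  calc |c * I0 + (∑ k ∈ Finset.Icc 1 p, α k * ∫ x in (-1:ℝ)..1, (rp p k).eval x * (leg m).eval x)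
        + ∫ x in (-1:ℝ)..1, ρ x * (leg m).eval x|
      ≤ |c * I0| + |∑ k ∈ Finset.Icc 1 p, α k * ∫ x in (-1:ℝ)..1, (rp p k).eval x * (leg m).eval x|
        + |∫ x in (-1:ℝ)..1, ρ x * (leg m).eval x| := abs_add_three _ _ _
    _ ≤ |A| * h ^ (2*p+1-m) * B 0 m
        + |A| * h ^ (2*p+1-m) * (∑ k ∈ Finset.Icc 1 p, B k m)
        + |A| * h ^ (2*p+1-m) * (2 * Mleg m) := by linarith
    _ ≤ |A| * ((∑ m' ∈ Finset.range (p+1), B 0 m')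
        + (∑ k ∈ Finset.Icc 1 p, ∑ m' ∈ Finset.range (p+1), B k m')
        + (∑ m' ∈ Finset.range (p+1), 2 * Mleg m')) * h ^ (2*p+1-m) := by
        nlinarith [abs_nonneg A, hpow_pos, hS0, hS1, hS2,
          mul_le_mul_of_nonneg_left hS0 (le_of_lt hpow_pos),
          mul_le_mul_of_nonneg_left hS1 (le_of_lt hpow_pos),
          mul_le_mul_of_nonneg_left hS2 (le_of_lt hpow_pos)]
end
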